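/- Let T be an ℕ^k-action by local homeomorphisms on a locally compact Hausdorff space X with dense orbit, suppose Σ_U = Σ for every nonempty open U, and let Y ⊆ X be open with T^p Y ⊆ Y for all p ∈ ℕ^k. Then for every (m,n) ∈ ℕ^k × ℕ^k with m − n ∈ H(T) and every x ∈ Y, T^m x = T^n x. -/

import Mathlib

/-- Let `T` be an `ℕ^k`-action by local homeomorphisms on a locally compact Hausdorff
space `X` with a dense orbit such that `Σ_U = Σ` for every nonempty open `U`, and let
`Y ⊆ X` be open with `T^p Y ⊆ Y` for all `p`. Then for every `(m,n)` with
`m − n ∈ H(T)` and every `x ∈ Y`, `T^m x = T^n x`. -/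
theorem TmTn_eq_of_diff_mem_HT {k : ℕ} {X : Type*} [TopologicalSpace X]
    [LocallyCompactSpace X] [T2Space X]
    (T : (Fin k → ℕ) → X → X) (hT0 : T 0 = id)
    (hTadd : ∀ m n, T (m + n) = T m ∘ T n)
    (hloc : ∀ m, IsLocalHomeomorph (T m))
    (hdense : ∃ x : X, Dense {y : X | ∃ m n : Fin k → ℕ, T m x = T n y})
    (hSigma : ∀ U : Set X, IsOpen U → U.Nonempty →
      {p : (Fin k → ℕ) × (Fin k → ℕ) | ∀ y ∈ U, T p.1 y = T p.2 y} =
      {p : (Fin k → ℕ) × (Fin k → ℕ) |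
        ∃ V : Set X, IsOpen V ∧ V.Nonempty ∧ ∀ y ∈ V, T p.1 y = T p.2 y})
    (Y : Set X) (hY : IsOpen Y) (hYinv : ∀ p : Fin k → ℕ, T p '' Y ⊆ Y) :
    ∀ m n : Fin k → ℕ,
      (fun i => (m i : ℤ) - n i) ∈
        {g : Fin k → ℤ | ∃ a b : Fin k → ℕ,
          (∃ V : Set X, IsOpen V ∧ V.Nonempty ∧ ∀ y ∈ V, T a y = T b y) ∧
          (fun i => (a i : ℤ) - b i) = g} →
      ∀ x ∈ Y, T m x = T n x := by
  rintro m n ⟨a, b, ⟨V, hVopen, hVne, hVab⟩, hab⟩ x hx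
  have hadd : a + n = b + m := by
    funext i
    have h := congrFun hab i
    have : (a i : ℤ) + n i = (b i : ℤ) + m i := by linarith
    simp only [Pi.add_apply]
    exact_mod_cast this
  have hYne : Y.Nonempty := ⟨x, hx⟩
  have hS := hSigma Y hY hYne
  have hab' : ∀ y ∈ Y, T a y = T b y := by
    have hmem : ((a, b) : (Fin k → ℕ) × (Fin k → ℕ)) ∈
        {p : (Fin k → ℕ) × (Fin k → ℕ) |
          ∃ V : Set X, IsOpen V ∧ V.Nonempty ∧ ∀ y ∈ V, T p.1 y = T p.2 y} :=
      ⟨V, hVopen, hVne, hVab⟩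
    rw [← hS] at hmem
    exact hmem
  have key : ∀ z ∈ T b '' Y, T m z = T n z := by
    rintro z ⟨y, hy, rfl⟩
    have hTny : T n y ∈ Y := hYinv n ⟨y, hy, rfl⟩
    calc T m (T b y) = T (m + b) y := (congrFun (hTadd m b) y).symm
      _ = T (a + n) y := by rw [show m + b = a + n by rw [hadd, add_comm]]
      _ = T a (T n y) := congrFun (hTadd a n) y
      _ = T b (T n y) := hab' _ hTny
      _ = T (b + n) y := (congrFun (hTadd b n) y).symm
      _ = T (n + b) y := by rw [add_comm]
      _ = T n (T b y) := congrFun (hTadd n b) y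
  have hopen : IsOpen (T b '' Y) := (hloc b).isOpenMap Y hY
  have hne : (T b '' Y).Nonempty := ⟨T b x, x, hx, rfl⟩
  have hmn : ((m, n) : (Fin k → ℕ) × (Fin k → ℕ)) ∈
      {p : (Fin k → ℕ) × (Fin k → ℕ) |
        ∃ V : Set X, IsOpen V ∧ V.Nonempty ∧ ∀ y ∈ V, T p.1 y = T p.2 y} :=
    ⟨T b '' Y, hopen, hne, key⟩
  rw [← hS] at hmn
  exact hmn x hx
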